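/- There is an absolute constant C > 0 such that the following holds. Let T ≥ 2, 1 ≤ M ≤ T, c > 1, and an integer k ≥ 2 with c ≤ √(T/M). Then for every real t with |t − T| ≤ M, one has |h^♯(t) − 1| ≤ C · (c^{−2k} + M/T). In particular h^♯ is exponentially close to 1 on the window [T − M, T + M]. -/

import Mathlib

/-- `Φ_{k,c}(z) := exp(−(z/c)^{2k})`. -/
noncomputable def Phi (k : ℕ) (c : ℝ) (z : ℂ) : ℂ :=
  Complex.exp (-((z / (c : ℂ)) ^ (2 * k)))

/-- The almost-flat window
`h^♯(z) = ((z² + 1/4)/(T² + 1/4)) · (Φ_{k,c}((z−T)/M) + Φ_{k,c}((z+T)/M))`. -/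
noncomputable def hSharp (T M c : ℝ) (k : ℕ) (z : ℂ) : ℂ :=
  ((z ^ 2 + 1 / 4) / ((T : ℂ) ^ 2 + 1 / 4)) *
    (Phi k c ((z - (T : ℂ)) / (M : ℂ)) + Phi k c ((z + (T : ℂ)) / (M : ℂ)))

lemma Phi_real (k : ℕ) (c x : ℝ) :
    Phi k c ((x : ℝ) : ℂ) = ((Real.exp (-(x / c) ^ (2 * k)) : ℝ) : ℂ) := by
  simp only [Phi]
  rw [show (-(((x:ℝ):ℂ) / (c : ℂ)) ^ (2 * k)) = (((-(x / c) ^ (2 * k) : ℝ)) : ℂ) by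
    push_cast; ring, Complex.ofReal_exp]

/-- There is an absolute `C > 0` such that for `T ≥ 2`, `1 ≤ M ≤ T`, `c > 1`,
`k ≥ 2` with `c ≤ √(T/M)`, and every real `t` with `|t − T| ≤ M`:
`|h^♯(t) − 1| ≤ C · (c^{−2k} + M/T)`. -/
theorem stmt_12 :
    ∃ C : ℝ, 0 < C ∧
      ∀ (T M c : ℝ) (k : ℕ) (t : ℝ), 2 ≤ T → 1 ≤ M → M ≤ T → 1 < c → 2 ≤ k →
        c ≤ Real.sqrt (T / M) → |t - T| ≤ M →
        ‖hSharp T M c k (t : ℂ) - 1‖ ≤ C * ((c ^ (2 * k))⁻¹ + M / T) := by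
  refine ⟨10, by norm_num, ?_⟩
  intro T M c k t hT hM hMT hc hk hcsq ht
  have hT0 : (0:ℝ) < T := by linarith
  have hM0 : (0:ℝ) < M := by linarith
  have hc0 : (0:ℝ) < c := by linarith
  have htTl : T - M ≤ t := by linarith [abs_le.mp ht |>.2, abs_le.mp ht |>.1]
  have htTu : t ≤ T + M := by linarith [abs_le.mp ht |>.2]
  have ht0 : 0 ≤ t := by linarith
  set a : ℝ := (t - T) / M with ha_def
  set b : ℝ := (t + T) / M with hb_def
  set E₁ : ℝ := Real.exp (-(a / c) ^ (2 * k)) with hE1_def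
  set E₂ : ℝ := Real.exp (-(b / c) ^ (2 * k)) with hE2_def
  set R : ℝ := (t ^ 2 + 1 / 4) / (T ^ 2 + 1 / 4) with hR_def
  -- reduce to a real statement
  have key : hSharp T M c k (t : ℂ) = ((R * (E₁ + E₂) : ℝ) : ℂ) := by
    have e1 : ((t : ℂ) - (T : ℂ)) / (M : ℂ) = ((a : ℝ) : ℂ) := by
      rw [ha_def]; push_cast; ring
    have e2 : ((t : ℂ) + (T : ℂ)) / (M : ℂ) = ((b : ℝ) : ℂ) := by
      rw [hb_def]; push_cast; ring
    unfold hSharp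
    rw [e1, e2, Phi_real, Phi_real]
    rw [hR_def, hE1_def, hE2_def]
    push_cast
    ring
  have key2 : ‖hSharp T M c k (t : ℂ) - 1‖ = |R * (E₁ + E₂) - 1| := by
    rw [key, show ((R * (E₁ + E₂) : ℝ) : ℂ) - 1 = ((R * (E₁ + E₂) - 1 : ℝ) : ℂ) by
      push_cast; ring, Complex.norm_real, Real.norm_eq_abs]
  rw [key2]
  -- basic facts
  have hk0 : k ≠ 0 := by omega
  have hev : Even (2 * k) := even_two_mul k
  -- E₁ bounds
  have hx_nonneg : (0:ℝ) ≤ (a / c) ^ (2 * k) := hev.pow_nonneg _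
  have hx_le : (a / c) ^ (2 * k) ≤ (c ^ (2 * k))⁻¹ := by
    have habs : |a / c| ≤ c⁻¹ := by
      rw [abs_div, abs_of_pos hc0]
      have h1 : |a| ≤ 1 := by
        rw [ha_def, abs_div, abs_of_pos hM0, div_le_one hM0]
        exact ht
      calc |a| / c ≤ 1 / c := by gcongr
        _ = c⁻¹ := one_div c
    calc (a / c) ^ (2 * k) = |a / c| ^ (2 * k) := (hev.pow_abs _).symm
      _ ≤ (c⁻¹) ^ (2 * k) := by
          exact pow_le_pow_left₀ (abs_nonneg _) habs _
      _ = (c ^ (2 * k))⁻¹ := by rw [inv_pow]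
  have hE1_pos : 0 < E₁ := Real.exp_pos _
  have hE1_le : E₁ ≤ 1 := by
    rw [hE1_def]
    calc Real.exp (-(a / c) ^ (2 * k)) ≤ Real.exp 0 :=
          Real.exp_le_exp.mpr (by linarith)
      _ = 1 := Real.exp_zero
  have hE1_sub : |E₁ - 1| ≤ (c ^ (2 * k))⁻¹ := by
    rw [abs_sub_comm, abs_of_nonneg (by linarith)]
    have := Real.add_one_le_exp (-(a / c) ^ (2 * k))
    rw [hE1_def]
    linarith
  -- E₂ bounds
  have hs1 : (1:ℝ) ≤ T / M := (one_le_div hM0).mpr hMT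
  have hs0 : (0:ℝ) ≤ T / M := by linarith
  have hbT : T / M ≤ b := by
    rw [hb_def]
    gcongr
    linarith
  have hsqrt_le : Real.sqrt (T / M) ≤ b / c := by
    have h1 : Real.sqrt (T / M) = (T / M) / Real.sqrt (T / M) :=
      (Real.div_sqrt).symm
    rw [h1]
    calc (T / M) / Real.sqrt (T / M) ≤ (T / M) / c :=
          div_le_div_of_nonneg_left hs0 hc0 hcsq
      _ ≤ b / c := by gcongr
  have hbc_pow : T / M ≤ (b / c) ^ (2 * k) := by
    have h1 : Real.sqrt (T / M) ^ (2 * k) ≤ (b / c) ^ (2 * k) :=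
      pow_le_pow_left₀ (Real.sqrt_nonneg _) hsqrt_le _
    have h2 : Real.sqrt (T / M) ^ (2 * k) = (T / M) ^ k := by
      rw [pow_mul, Real.sq_sqrt hs0]
    have h3 : T / M ≤ (T / M) ^ k := le_self_pow₀ hs1 hk0
    linarith
  have hE2_pos : 0 < E₂ := Real.exp_pos _
  have hE2_le1 : E₂ ≤ 1 := by
    rw [hE2_def]
    calc Real.exp (-(b / c) ^ (2 * k)) ≤ Real.exp 0 :=
          Real.exp_le_exp.mpr (by nlinarith)
      _ = 1 := Real.exp_zero
  have hE2_le : E₂ ≤ M / T := by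
    have h1 : E₂ ≤ Real.exp (-(T / M)) := by
      rw [hE2_def]; exact Real.exp_le_exp.mpr (by linarith)
    have h2 : Real.exp (-(T / M)) ≤ M / T := by
      rw [Real.exp_neg]
      have h3 : T / M ≤ Real.exp (T / M) := by
        have := Real.add_one_le_exp (T / M); linarith
      have h4 : (Real.exp (T / M))⁻¹ ≤ (T / M)⁻¹ :=
        inv_anti₀ (by linarith) h3
      rw [inv_div] at h4
      exact h4
    linarith
  -- R bound
  have hTq : (0:ℝ) < T ^ 2 + 1 / 4 := by positivity
  have hR1 : |R - 1| ≤ 3 * (M / T) := by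
    have h : R - 1 = (t ^ 2 - T ^ 2) / (T ^ 2 + 1 / 4) := by
      rw [hR_def]; field_simp; ring
    rw [h, abs_div, abs_of_pos hTq, div_le_iff₀ hTq]
    have habs : |t ^ 2 - T ^ 2| ≤ 3 * M * T := by
      have he : t ^ 2 - T ^ 2 = (t - T) * (t + T) := by ring
      rw [he, abs_mul]
      have h1 : |t + T| ≤ 3 * T := by
        rw [abs_le]; constructor <;> linarith
      calc |t - T| * |t + T| ≤ M * (3 * T) :=
            mul_le_mul ht h1 (abs_nonneg _) hM0.le
        _ = 3 * M * T := by ring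
    have h5 : 3 * M * T ≤ 3 * (M / T) * (T ^ 2 + 1 / 4) := by
      have he : 3 * (M / T) * (T ^ 2 + 1 / 4) = 3 * M * T + 3 * M / (4 * T) := by
        field_simp
      have hp : 0 ≤ 3 * M / (4 * T) := by positivity
      linarith
    linarith
  -- combine
  have hv0 : (0:ℝ) < M / T := by positivity
  have hu0 : (0:ℝ) ≤ (c ^ (2 * k))⁻¹ := by positivity
  calc |R * (E₁ + E₂) - 1|
      = |(R - 1) * (E₁ + E₂) + ((E₁ - 1) + E₂)| := by ring_nf
    _ ≤ |(R - 1) * (E₁ + E₂)| + |(E₁ - 1) + E₂| := abs_add_le _ _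
    _ ≤ |R - 1| * |E₁ + E₂| + (|E₁ - 1| + |E₂|) := by
        rw [abs_mul]; gcongr; exact abs_add_le _ _
    _ ≤ (3 * (M / T)) * 2 + ((c ^ (2 * k))⁻¹ + M / T) := by
        have h6 : |E₁ + E₂| ≤ 2 := by
          rw [abs_le]; constructor <;> linarith
        have h7 : |R - 1| * |E₁ + E₂| ≤ (3 * (M / T)) * 2 :=
          mul_le_mul hR1 h6 (abs_nonneg _) (by positivity)
        have h8 : |E₂| = E₂ := abs_of_pos hE2_pos
        linarith
    _ ≤ 10 * ((c ^ (2 * k))⁻¹ + M / T) := by linarith
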